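/- Let V be a finite-dimensional complex inner product space with orthogonal direct sum decomposition V = U₁ ⊕ U₂, and let W be any subspace of V with orthogonal projection P_W : V → W. Then W decomposes as the orthogonal direct sum W = P_W(U₁) ⊕ (W ∩ U₂). -/

import Mathlib

/-- Let `V` be a finite-dimensional complex inner product space with an
orthogonal direct sum decomposition `V = U₁ ⊕ U₂` (i.e. `U₂ = U₁ᗮ`), and let `W` be any
subspace with orthogonal projection `P_W : V → V`.  Then `W` decomposes as the orthogonal
direct sum `W = P_W(U₁) ⊕ (W ∩ U₂)`. -/
theorem stmt0 (V : Type) [NormedAddCommGroup V] [InnerProductSpace ℂ V]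
    [FiniteDimensional ℂ V] (U₁ U₂ W : Submodule ℂ V)
    (horth : U₂ = U₁ᗮ)
    (P : V →ₗ[ℂ] V) (hP : P = W.subtype ∘ₗ (W.orthogonalProjection).toLinearMap) :
    (U₁.map P ⊔ (W ⊓ U₂) = W) ∧
    Disjoint (U₁.map P) (W ⊓ U₂) ∧
    (∀ x ∈ U₁.map P, ∀ y ∈ W ⊓ U₂, @inner ℂ V _ x y = 0) := by
  -- P maps into W
  have hPmem : ∀ v : V, P v ∈ W := by
    intro v; rw [hP]; exact (W.orthogonalProjection v).2
  -- P fixes W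
  have hPfix : ∀ w ∈ W, P w = w := by
    intro w hw
    rw [hP]
    simp only [LinearMap.comp_apply, ContinuousLinearMap.coe_coe, Submodule.subtype_apply]
    exact congrArg Subtype.val (Submodule.orthogonalProjectionOnto_mem_subspace_eq_self (⟨w, hw⟩ : W))
  -- P is self-adjoint
  have hSA : ∀ a b : V, (inner ℂ (P a) b : ℂ) = inner ℂ a (P b) := by
    intro a b
    rw [hP]
    exact W.inner_starProjection_left_eq_right a b
  have hMW : U₁.map P ≤ W := by
    rintro x ⟨u, _, rfl⟩; exact hPmem u
  -- orthogonality
  have hOrth : ∀ x ∈ U₁.map P, ∀ y ∈ W ⊓ U₂, (inner ℂ x y : ℂ) = 0 := by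
    rintro x ⟨u, hu, rfl⟩ y ⟨hyW, hyU₂⟩
    rw [hSA, hPfix y hyW]
    rw [horth] at hyU₂
    exact (Submodule.mem_orthogonal U₁ y).mp hyU₂ u hu
  -- disjointness
  have hDisj : Disjoint (U₁.map P) (W ⊓ U₂) := by
    rw [Submodule.disjoint_def]
    intro x hx1 hx2
    exact inner_self_eq_zero.mp (hOrth x hx1 x hx2)
  refine ⟨?_, hDisj, hOrth⟩
  apply le_antisymm (sup_le hMW inf_le_left)
  intro w hw
  obtain ⟨m, hm, z, hz, hwz⟩ := (U₁.map P).exists_add_mem_mem_orthogonal w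
  have hzW : z ∈ W := by
    have : z = w - m := by rw [hwz]; abel
    rw [this]; exact W.sub_mem hw (hMW hm)
  have hzU₂ : z ∈ U₂ := by
    rw [horth, Submodule.mem_orthogonal]
    intro u hu
    have h0 : (inner ℂ (P u) z : ℂ) = 0 :=
      ((Submodule.mem_orthogonal _ z).mp hz) (P u) ⟨u, hu, rfl⟩
    calc (inner ℂ u z : ℂ) = inner ℂ u (P z) := by rw [hPfix z hzW]
      _ = inner ℂ (P u) z := (hSA u z).symm
      _ = 0 := h0
  rw [hwz]
  exact Submodule.add_mem_sup hm ⟨hzW, hzU₂⟩
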